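/- Let q be a prime power and A = F_q[T]. The set of finite-index subgroups of SL₂(A) with nonzero level is countable. -/

import Mathlib

open Matrix Polynomial

/-- The unipotent matrix `[[1,a],[0,1]]` as an element of `GL₂(R)`. -/
def unipGL {R : Type*} [CommRing R] (a : R) : GL (Fin 2) R :=
  ⟨!![1, a; 0, 1], !![1, -a; 0, 1],
    by simp [Matrix.mul_fin_two, Matrix.one_fin_two],
    by simp [Matrix.mul_fin_two, Matrix.one_fin_two]⟩

/-- The quasi-level of a subgroup `Γ ≤ SL₂(R)`: the set of `a ∈ R` such that the unipotent
matrix `[[1,a],[0,1]]` lies in `g Γ g⁻¹` for every `g ∈ GL₂(R)`. -/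
def quasiLevelSL {R : Type*} [CommRing R]
    (Γ : Subgroup (Matrix.SpecialLinearGroup (Fin 2) R)) : Set R :=
  {a : R | ∀ g : GL (Fin 2) R,
    g⁻¹ * unipGL a * g ∈ Γ.map Matrix.SpecialLinearGroup.toGL}

section Aux

open Subgroup

variable {R : Type*} [CommRing R]

/-- upper elementary matrix in SL₂ -/
def uSL (a : R) : SpecialLinearGroup (Fin 2) R :=
  ⟨!![1, a; 0, 1], by simp [Matrix.det_fin_two_of]⟩

/-- lower elementary matrix in SL₂ -/
def lSL (a : R) : SpecialLinearGroup (Fin 2) R :=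
  ⟨!![1, 0; a, 1], by simp [Matrix.det_fin_two_of]⟩

/-- the Weyl element -/
def wSL : SpecialLinearGroup (Fin 2) R :=
  ⟨!![0, 1; -1, 0], by simp [Matrix.det_fin_two_of]⟩

/-- the inverse of the Weyl element -/
def wSL' : SpecialLinearGroup (Fin 2) R :=
  ⟨!![0, -1; 1, 0], by simp [Matrix.det_fin_two_of]⟩

theorem uSL_mul (a b : R) : uSL a * uSL b = uSL (a + b) := by
  apply Subtype.ext
  change ((uSL a : Matrix (Fin 2) (Fin 2) R) * uSL b) = _
  simp [uSL, Matrix.mul_fin_two, add_comm]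

theorem lSL_mul (a b : R) : lSL a * lSL b = lSL (a + b) := by
  apply Subtype.ext
  change ((lSL a : Matrix (Fin 2) (Fin 2) R) * lSL b) = _
  simp [lSL, Matrix.mul_fin_two, add_comm]

theorem uSL_zero : (uSL 0 : SpecialLinearGroup (Fin 2) R) = 1 := by
  apply Subtype.ext
  simp [uSL, SpecialLinearGroup.coe_one, Matrix.one_fin_two]

theorem wSL_eq : (wSL : SpecialLinearGroup (Fin 2) R) = uSL 1 * lSL (-1) * uSL 1 := by
  apply Subtype.ext
  change _ = ((uSL 1 : SpecialLinearGroup (Fin 2) R) : Matrix (Fin 2) (Fin 2) R) * ((lSL (-1) : SpecialLinearGroup (Fin 2) R) : Matrix (Fin 2) (Fin 2) R) * ((uSL 1 : SpecialLinearGroup (Fin 2) R) : Matrix (Fin 2) (Fin 2) R)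
  simp [uSL, lSL, wSL, Matrix.mul_fin_two]

theorem wSL_mul_wSL' : (wSL * wSL' : SpecialLinearGroup (Fin 2) R) = 1 := by
  apply Subtype.ext
  change ((wSL : SpecialLinearGroup (Fin 2) R) : Matrix (Fin 2) (Fin 2) R) * ((wSL' : SpecialLinearGroup (Fin 2) R) : Matrix (Fin 2) (Fin 2) R) = _
  simp [wSL, wSL', Matrix.mul_fin_two, SpecialLinearGroup.coe_one, Matrix.one_fin_two]

theorem wSL'_eq_inv : (wSL' : SpecialLinearGroup (Fin 2) R) = wSL⁻¹ :=
  (inv_eq_of_mul_eq_one_right wSL_mul_wSL').symm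

/-- the set of elementary matrices -/
def elemSet (R : Type*) [CommRing R] : Set (SpecialLinearGroup (Fin 2) R) :=
  Set.range uSL ∪ Set.range lSL

theorem uSL_mem_closure (a : R) : uSL a ∈ closure (elemSet R) :=
  subset_closure (Or.inl ⟨a, rfl⟩)

theorem lSL_mem_closure (a : R) : lSL a ∈ closure (elemSet R) :=
  subset_closure (Or.inr ⟨a, rfl⟩)

theorem wSL_mem_closure : (wSL : SpecialLinearGroup (Fin 2) R) ∈ closure (elemSet R) := by
  rw [wSL_eq]
  exact mul_mem (mul_mem (uSL_mem_closure 1) (lSL_mem_closure (-1))) (uSL_mem_closure 1)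

theorem base_identity (M : SpecialLinearGroup (Fin 2) R) (a b d : R)
    (hM : (M : Matrix (Fin 2) (Fin 2) R) = !![a, b; 0, d]) (had : a * d = 1) :
    M * uSL (-(d * b)) * wSL = uSL a * lSL (-d) * uSL a := by
  ext i j
  change (((M : SpecialLinearGroup (Fin 2) R) : Matrix (Fin 2) (Fin 2) R) * ((uSL (-(d * b)) : SpecialLinearGroup (Fin 2) R) : Matrix (Fin 2) (Fin 2) R) * ((wSL : SpecialLinearGroup (Fin 2) R) : Matrix (Fin 2) (Fin 2) R)) i j = (((uSL a : SpecialLinearGroup (Fin 2) R) : Matrix (Fin 2) (Fin 2) R) * ((lSL (-d) : SpecialLinearGroup (Fin 2) R) : Matrix (Fin 2) (Fin 2) R) * ((uSL a : SpecialLinearGroup (Fin 2) R) : Matrix (Fin 2) (Fin 2) R)) i j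
  fin_cases i <;> fin_cases j <;>
    simp [uSL, lSL, wSL, SpecialLinearGroup.coe_mul, hM, Matrix.mul_apply,
      Fin.sum_univ_succ] <;>
    first
    | rfl
    | linear_combination had
    | linear_combination (-a - b) * had
    | linear_combination (1 - b) * had
    | linear_combination (b + 1) * had
    | linear_combination (-a) * had
    | linear_combination a * had
    | linear_combination b * had
    | linear_combination (-b) * had
    | linear_combination (a + b) * had
    | linear_combination (b - 1) * had
    | ring

theorem step_entry (M : SpecialLinearGroup (Fin 2) R) (q a b c d : R)
    (hM : (M : Matrix (Fin 2) (Fin 2) R) = !![a, b; c, d]) :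
    ((wSL' * (uSL (-q) * M) : SpecialLinearGroup (Fin 2) R) : Matrix (Fin 2) (Fin 2) R) 1 0
      = a - q * c := by
  change (((wSL' : SpecialLinearGroup (Fin 2) R) : Matrix (Fin 2) (Fin 2) R) * (((uSL (-q) : SpecialLinearGroup (Fin 2) R) : Matrix (Fin 2) (Fin 2) R) * ((M : SpecialLinearGroup (Fin 2) R) : Matrix (Fin 2) (Fin 2) R))) 1 0 = _
  simp [uSL, wSL', SpecialLinearGroup.coe_mul, hM, Matrix.mul_fin_two]
  ring

theorem lSL_conj (a : R) : lSL a = wSL * uSL (-a) * wSL⁻¹ := by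
  have h : lSL a * wSL = wSL * uSL (-a) := by
    apply Subtype.ext
    change ((lSL a : SpecialLinearGroup (Fin 2) R) : Matrix (Fin 2) (Fin 2) R) * ((wSL : SpecialLinearGroup (Fin 2) R) : Matrix (Fin 2) (Fin 2) R) = ((wSL : SpecialLinearGroup (Fin 2) R) : Matrix (Fin 2) (Fin 2) R) * ((uSL (-a) : SpecialLinearGroup (Fin 2) R) : Matrix (Fin 2) (Fin 2) R)
    simp [uSL, lSL, wSL, SpecialLinearGroup.coe_mul, Matrix.mul_fin_two]
  rw [← h]
  group

end Aux

section Gen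

open Subgroup

variable {R : Type*} [EuclideanDomain R]

theorem elem_closure_eq_top : closure (elemSet R) = ⊤ := by
  rw [eq_top_iff']
  intro M₀
  suffices h : ∀ c : R, ∀ M : SpecialLinearGroup (Fin 2) R,
      (M : Matrix (Fin 2) (Fin 2) R) 1 0 = c → M ∈ closure (elemSet R) from h _ M₀ rfl
  intro c
  refine EuclideanDomain.r_wellFounded.induction
    (C := fun c => ∀ M : SpecialLinearGroup (Fin 2) R,
      (M : Matrix (Fin 2) (Fin 2) R) 1 0 = c → M ∈ closure (elemSet R)) c ?_
  intro c IH M hc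
  by_cases h0 : c = 0
  · -- base case : lower-left entry is zero
    subst h0
    set Mm : Matrix (Fin 2) (Fin 2) R := (M : Matrix (Fin 2) (Fin 2) R) with hMm
    have hM : Mm = !![Mm 0 0, Mm 0 1; 0, Mm 1 1] := by
      rw [← hc]; exact Matrix.eta_fin_two _
    have hdet : Mm.det = 1 := M.2
    rw [Matrix.det_fin_two, hc] at hdet
    have had : Mm 0 0 * Mm 1 1 = 1 := by linear_combination hdet
    have hbase := base_identity M (Mm 0 0) (Mm 0 1) (Mm 1 1) hM had
    have hmem : uSL (Mm 0 0) * lSL (-(Mm 1 1)) * uSL (Mm 0 0) ∈ closure (elemSet R) :=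
      mul_mem (mul_mem (uSL_mem_closure _) (lSL_mem_closure _)) (uSL_mem_closure _)
    have hMeq : M = (uSL (Mm 0 0) * lSL (-(Mm 1 1)) * uSL (Mm 0 0)) * wSL⁻¹
        * (uSL (-(Mm 1 1 * Mm 0 1)))⁻¹ := by
      rw [← hbase]; group
    rw [hMeq]
    exact mul_mem (mul_mem hmem (inv_mem wSL_mem_closure)) (inv_mem (uSL_mem_closure _))
  · -- inductive step
    set a : R := (M : Matrix (Fin 2) (Fin 2) R) 0 0 with ha
    set q : R := a / c with hq
    set M' : SpecialLinearGroup (Fin 2) R := wSL' * (uSL (-q) * M) with hM'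
    have heta : (M : Matrix (Fin 2) (Fin 2) R)
        = !![(M : Matrix (Fin 2) (Fin 2) R) 0 0, (M : Matrix (Fin 2) (Fin 2) R) 0 1;
            (M : Matrix (Fin 2) (Fin 2) R) 1 0, (M : Matrix (Fin 2) (Fin 2) R) 1 1] :=
      Matrix.eta_fin_two _
    have hM'entry : (M' : Matrix (Fin 2) (Fin 2) R) 1 0 = a % c := by
      rw [hM', step_entry M q _ _ _ _ heta, ← ha, hc, hq]
      have := EuclideanDomain.div_add_mod a c
      linear_combination -this
    have hM'mem : M' ∈ closure (elemSet R) :=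
      IH (a % c) (EuclideanDomain.mod_lt a h0) M' hM'entry
    have hMeq : M = uSL q * (wSL * M') := by
      rw [hM', wSL'_eq_inv, mul_inv_cancel_left, ← mul_assoc, uSL_mul,
        add_neg_cancel, uSL_zero, one_mul]
    rw [hMeq]
    exact mul_mem (uSL_mem_closure q) (mul_mem wSL_mem_closure hM'mem)

end Gen

section Quot

open Subgroup

variable {R : Type*} [CommRing R]

/-- The normal subgroup generated by the unipotents with entry in `I`. -/
def NI (I : Ideal R) : Subgroup (SpecialLinearGroup (Fin 2) R) :=
  Subgroup.normalClosure (uSL '' (I : Set R))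

instance NI_normal (I : Ideal R) : (NI I).Normal :=
  Subgroup.normalClosure_normal

theorem uSL_mem_NI {I : Ideal R} {i : R} (hi : i ∈ I) : uSL i ∈ NI I :=
  Subgroup.subset_normalClosure ⟨i, hi, rfl⟩

theorem lSL_mem_NI {I : Ideal R} {i : R} (hi : i ∈ I) : lSL i ∈ NI I := by
  rw [lSL_conj]
  exact (NI_normal I).conj_mem _ (uSL_mem_NI (neg_mem hi)) wSL

theorem NI_le_of_quasiLevel {I : Ideal R} {Γ : Subgroup (SpecialLinearGroup (Fin 2) R)}
    (h : (I : Set R) ⊆ quasiLevelSL Γ) : NI I ≤ Γ := by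
  show Subgroup.closure (Group.conjugatesOfSet (uSL '' (I : Set R))) ≤ Γ
  rw [Subgroup.closure_le]
  intro x hx
  rw [Group.mem_conjugatesOfSet_iff] at hx
  obtain ⟨y, ⟨i, hi, rfl⟩, hconj⟩ := hx
  rw [isConj_iff] at hconj
  obtain ⟨c, rfl⟩ := hconj
  have hql := h hi (Matrix.SpecialLinearGroup.toGL c⁻¹)
  have hkey : (Matrix.SpecialLinearGroup.toGL c⁻¹)⁻¹ * unipGL i
      * Matrix.SpecialLinearGroup.toGL c⁻¹
      = Matrix.SpecialLinearGroup.toGL (c * uSL i * c⁻¹) := by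
    have h1 : unipGL i = Matrix.SpecialLinearGroup.toGL (uSL i) := Units.ext rfl
    rw [h1, ← _root_.map_inv, inv_inv, ← _root_.map_mul, ← _root_.map_mul]
  rw [hkey] at hql
  obtain ⟨y, hyΓ, hy⟩ := hql
  have : y = c * uSL i * c⁻¹ :=
    Subtype.coe_injective (congrArg Units.val hy :)
  rwa [← this]

end Quot

section QuotFG

open Subgroup

variable {Fq : Type*} [Field Fq] [Fintype Fq]

theorem finite_quot_span {f : Polynomial Fq} (hf : f ≠ 0) :
    Finite (Polynomial Fq ⧸ Ideal.span {f}) := by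
  have : Module.Finite Fq (AdjoinRoot f) := (AdjoinRoot.powerBasis hf).finite
  exact Module.finite_of_finite Fq (M := AdjoinRoot f)

theorem fg_quot (I : Ideal (Polynomial Fq)) (hfin : Finite (Polynomial Fq ⧸ I)) :
    Group.FG (SpecialLinearGroup (Fin 2) (Polynomial Fq) ⧸ NI I) := by
  classical
  set A := Polynomial Fq
  set π := QuotientGroup.mk' (NI I) with hπ
  set sec : (A ⧸ I) → A := Function.surjInv Ideal.Quotient.mk_surjective with hsec
  have hsec' : ∀ x, Ideal.Quotient.mk I (sec x) = x := fun x =>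
    Function.surjInv_eq Ideal.Quotient.mk_surjective x
  set reps : Set A := Set.range sec with hreps
  have hrepsfin : reps.Finite := Set.finite_range _
  refine Group.fg_iff.mpr ⟨⇑π '' (uSL '' reps ∪ lSL '' reps), ?_, ?_⟩
  · -- the image generates
    have hmaptop : Subgroup.map π ⊤ = ⊤ := by
      rw [← MonoidHom.range_eq_map]
      exact MonoidHom.range_eq_top.mpr (QuotientGroup.mk'_surjective _)
    rw [← elem_closure_eq_top (R := A), MonoidHom.map_closure] at hmaptop
    refine top_unique ?_
    rw [← hmaptop, Subgroup.closure_le]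
    rintro x ⟨m, hm, rfl⟩
    rcases hm with ⟨a, rfl⟩ | ⟨a, rfl⟩
    · set r : A := sec (Ideal.Quotient.mk I a) with hr
      have hsub : r - a ∈ I := by
        rw [← Ideal.Quotient.eq]
        exact hsec' _
      have heq : π (uSL a) = π (uSL r) := by
        rw [QuotientGroup.mk'_eq_mk']
        exact ⟨uSL (r - a), uSL_mem_NI hsub, by rw [uSL_mul]; congr 1; ring⟩
      rw [heq]
      exact Subgroup.subset_closure ⟨uSL r, Or.inl ⟨r, ⟨_, rfl⟩, rfl⟩, rfl⟩
    · set r : A := sec (Ideal.Quotient.mk I a) with hr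
      have hsub : r - a ∈ I := by
        rw [← Ideal.Quotient.eq]
        exact hsec' _
      have heq : π (lSL a) = π (lSL r) := by
        rw [QuotientGroup.mk'_eq_mk']
        exact ⟨lSL (r - a), lSL_mem_NI hsub, by rw [lSL_mul]; congr 1; ring⟩
      rw [heq]
      exact Subgroup.subset_closure ⟨lSL r, Or.inr ⟨r, ⟨_, rfl⟩, rfl⟩, rfl⟩
  · exact ((hrepsfin.image uSL).union (hrepsfin.image lSL)).image _

end QuotFG

theorem countable_fg_subgroups {Q : Type*} [Group Q] [Countable Q] :
    {H : Subgroup Q | H.FG}.Countable := by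
  refine (Set.countable_range (fun s : Finset Q => Subgroup.closure (s : Set Q))).mono ?_
  rintro H hH
  obtain ⟨S, hS, hfin⟩ := (Subgroup.fg_iff H).mp hH
  refine ⟨hfin.toFinset, ?_⟩
  show Subgroup.closure (↑hfin.toFinset : Set Q) = H
  rw [Set.Finite.coe_toFinset, hS]

/-- For `A = Fq[T]`, the set of finite-index subgroups of `SL₂(A)` with
nonzero level (i.e. whose quasi-level contains a nonzero ideal of `A`) is countable. -/
theorem countable_finiteIndex_subgroups_of_nonzero_level
    (Fq : Type*) [Field Fq] [Fintype Fq] :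
    {Γ : Subgroup (Matrix.SpecialLinearGroup (Fin 2) (Polynomial Fq)) |
      Γ.FiniteIndex ∧ ∃ I : Ideal (Polynomial Fq), I ≠ ⊥ ∧
        (I : Set (Polynomial Fq)) ⊆ quasiLevelSL Γ}.Countable := by
  classical
  set A := Polynomial Fq with hA
  have hAcount : Countable A := by
    have h : Countable (AddMonoidAlgebra Fq ℕ) := by
      exact AddMonoidAlgebra.coeff_injective.countable
    exact Polynomial.toFinsupp_injective.countable
  have hGcount : Countable (SpecialLinearGroup (Fin 2) A) := by
    have : Countable (Matrix (Fin 2) (Fin 2) A) := by unfold Matrix; infer_instance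
    exact Subtype.countable
  -- countable union over nonzero polynomials
  refine Set.Countable.mono ?_
    (Set.Countable.biUnion (Set.to_countable {f : A | f ≠ 0})
      (fun f hf => ?_) :
      (⋃ f ∈ {f : A | f ≠ 0},
        {Γ : Subgroup (SpecialLinearGroup (Fin 2) A) |
          Γ.FiniteIndex ∧ NI (Ideal.span {f}) ≤ Γ}).Countable)
  · -- main set included in the union
    rintro Γ ⟨hFI, I, hIbot, hql⟩
    obtain ⟨f, hfI⟩ := (IsPrincipalIdealRing.principal I).principal
    have hIf : I = Ideal.span {f} := hfI
    have hf0 : f ≠ 0 := by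
      rintro rfl
      exact hIbot (by rw [hIf]; simp)
    refine Set.mem_biUnion hf0 ⟨hFI, NI_le_of_quasiLevel ?_⟩
    rwa [← hIf]
  · -- each piece is countable
    set N := NI (Ideal.span {f}) with hN
    set Q := SpecialLinearGroup (Fin 2) A ⧸ N with hQ
    have hQcount : Countable Q := Function.Surjective.countable (QuotientGroup.mk'_surjective N)
    have hQfg : Group.FG Q := fg_quot _ (finite_quot_span hf)
    set π := QuotientGroup.mk' N with hπ
    refine Set.MapsTo.countable_of_injOn
      (f := fun Γ : Subgroup (SpecialLinearGroup (Fin 2) A) => Subgroup.map π Γ)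
      (t := {H : Subgroup Q | H.FG}) ?_ ?_ countable_fg_subgroups
    · rintro Γ ⟨hΓFI, hΓN⟩
      have hker : π.ker ≤ Γ := by rw [hπ, QuotientGroup.ker_mk']; exact hΓN
      have hidx : (Subgroup.map π Γ).index = Γ.index :=
        Subgroup.index_map_eq Γ (QuotientGroup.mk'_surjective N) hker
      haveI : (Subgroup.map π Γ).FiniteIndex := ⟨by rw [hidx]; exact hΓFI.index_ne_zero⟩
      haveI := hQfg
      exact (Group.fg_iff_subgroup_fg (Subgroup.map π Γ)).mp
        (Subgroup.fg_of_index_ne_zero (Subgroup.map π Γ))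
    · rintro Γ₁ ⟨_, hΓ₁⟩ Γ₂ ⟨_, hΓ₂⟩ h
      have e1 : Subgroup.comap π (Subgroup.map π Γ₁) = Γ₁ := by
        rw [Subgroup.comap_map_eq, hπ, QuotientGroup.ker_mk', sup_eq_left.mpr hΓ₁]
      have e2 : Subgroup.comap π (Subgroup.map π Γ₂) = Γ₂ := by
        rw [Subgroup.comap_map_eq, hπ, QuotientGroup.ker_mk', sup_eq_left.mpr hΓ₂]
      rw [← e1, ← e2]; exact congrArg (Subgroup.comap π) h
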